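/- Let Γ be a finite group acting on L ≅ ℤ^ℓ via injective ρ : Γ → GL(L). Then the number of Γ-orbits of L/qL, as a function of q ∈ ℤ_{>0}, is a quasi-polynomial of degree ℓ with leading coefficient 1/#Γ, equal to (1/#Γ) Σ_{γ∈Γ} #(L/qL)^γ by Burnside's lemma. -/

import Mathlib

open Matrix

lemma keyCount (ℓ : ℕ) (M : Matrix (Fin ℓ) (Fin ℓ) ℤ) :
    ∃ (r : ℕ) (a : Fin r → ℤ), r ≤ ℓ ∧ (∀ i, a i ≠ 0) ∧ (r = 0 ↔ M = 0) ∧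
      ∀ q : ℕ, 0 < q →
        Nat.card {x : Fin ℓ → ZMod q // Matrix.vecMul x (M.map (Int.cast : ℤ → ZMod q)) = 0}
          = (∏ i, Int.gcd (a i) (q : ℤ)) * q ^ (ℓ - r) := by
  classical
  set fl : (Fin ℓ → ℤ) →ₗ[ℤ] (Fin ℓ → ℤ) := M.vecMulLinear with hfl
  set N : Submodule ℤ (Fin ℓ → ℤ) := LinearMap.range fl with hN
  obtain ⟨r, bM, bN, φ, a, hsnf⟩ := N.smithNormalForm (Pi.basisFun ℤ (Fin ℓ))
  have hane : ∀ i, a i ≠ 0 := by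
    intro i hai
    apply bN.ne_zero i
    have := hsnf i
    rw [hai, zero_smul] at this
    exact Subtype.ext this
  have hrow : ∀ x : Fin ℓ → ℤ, fl x = x ᵥ* M := fun x => rfl
  refine ⟨r, a, by simpa using Fintype.card_le_of_embedding φ, hane, ?_, ?_⟩
  · constructor
    · intro hr
      subst hr
      have hbot : N = ⊥ := by
        rw [eq_bot_iff]
        intro x hx
        have h0 : (⟨x, hx⟩ : N) = 0 := by
          have := bN.sum_repr ⟨x, hx⟩
          simpa using this.symm
        simpa using congrArg Subtype.val h0
      have hfl0 : fl = 0 := LinearMap.range_eq_bot.mp (by rw [← hN, hbot])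
      ext i j
      have := congrFun (congrArg (fun f : (Fin ℓ → ℤ) →ₗ[ℤ] (Fin ℓ → ℤ) => f (Pi.single i 1)) hfl0) j
      simp only [hrow, LinearMap.zero_apply, Pi.zero_apply] at this
      rw [Matrix.zero_apply]
      rw [← this]
      simp [Matrix.vecMul, dotProduct, Pi.single_apply]
    · intro hM
      by_contra hr
      have hi : Fin r := ⟨0, Nat.pos_of_ne_zero hr⟩
      apply bN.ne_zero hi
      have hmem : (bN hi : Fin ℓ → ℤ) ∈ N := (bN hi).2
      have hbot : N = ⊥ := by
        rw [hN, LinearMap.range_eq_bot]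
        ext x j
        simp [hrow, hM]
      have hmem' : (bN hi : Fin ℓ → ℤ) ∈ (⊥ : Submodule ℤ (Fin ℓ → ℤ)) := by
        rw [← hbot]; exact hmem
      exact Subtype.ext (by simpa using hmem')
  · intro q hq
    haveI : NeZero q := ⟨hq.ne'⟩
    set π : (Fin ℓ → ℤ) →+ (Fin ℓ → ZMod q) :=
      { toFun := fun x j => ((x j : ℤ) : ZMod q)
        map_zero' := by ext j; simp
        map_add' := by intro x y; ext j; simp } with hπ
    set F : (Fin ℓ → ZMod q) →+ (Fin ℓ → ZMod q) :=
      ((M.map (Int.cast : ℤ → ZMod q)).vecMulLinear).toAddMonoidHom with hF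
    have hπs : Function.Surjective π := by
      intro y
      refine ⟨fun j => ((y j).val : ℤ), ?_⟩
      ext j
      simp [hπ, ZMod.natCast_val, ZMod.intCast_cast, ZMod.cast_id]
    have hcomm : ∀ x, F (π x) = π (fl x) := by
      intro x
      ext j
      simp only [hF, hπ, LinearMap.toAddMonoidHom_coe, Matrix.vecMulLinear_apply,
        AddMonoidHom.coe_mk, ZeroHom.coe_mk, hrow, Matrix.vecMul, dotProduct,
        Matrix.map_apply]
      push_cast
      rfl
    set qT : Submodule ℤ (Fin ℓ → ℤ) :=
      LinearMap.range ((q : ℤ) • (LinearMap.id : (Fin ℓ → ℤ) →ₗ[ℤ] (Fin ℓ → ℤ))) with hqT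
    have hqTmem : ∀ x, x ∈ qT ↔ ∀ j, (q : ℤ) ∣ x j := by
      intro x
      constructor
      · rintro ⟨y, rfl⟩ j
        exact ⟨y j, rfl⟩
      · intro h
        refine ⟨fun j => x j / q, ?_⟩
        ext j
        simpa using Int.mul_ediv_cancel' (h j)
    have hkerπ : ∀ x, π x = 0 ↔ x ∈ qT := by
      intro x
      rw [hqTmem]
      simp only [hπ, AddMonoidHom.coe_mk, ZeroHom.coe_mk, funext_iff, Pi.zero_apply]
      exact forall_congr' fun j => ZMod.intCast_zmod_eq_zero_iff_dvd _ _
    set P : Submodule ℤ (Fin ℓ → ℤ) := N ⊔ qT with hP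
    -- Step A : count = index
    have stepA : Nat.card {x : Fin ℓ → ZMod q //
        Matrix.vecMul x (M.map (Int.cast : ℤ → ZMod q)) = 0} = P.toAddSubgroup.index := by
      set Q : (Fin ℓ → ℤ) →+ (Fin ℓ → ZMod q) ⧸ F.range :=
        (QuotientAddGroup.mk' F.range).comp π with hQ
      have hQs : Function.Surjective Q :=
        (QuotientAddGroup.mk'_surjective F.range).comp hπs
      have hQker : Q.ker = P.toAddSubgroup := by
        ext x
        simp only [hQ, AddMonoidHom.mem_ker, AddMonoidHom.coe_comp, Function.comp_apply,
          QuotientAddGroup.mk'_apply, QuotientAddGroup.eq_zero_iff,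
          Submodule.mem_toAddSubgroup]
        constructor
        · rintro ⟨y, hy⟩
          obtain ⟨z, rfl⟩ := hπs y
          rw [hcomm] at hy
          have hd : x - fl z ∈ qT := by
            rw [← hkerπ]
            rw [map_sub, hy, sub_self]
          have : x = fl z + (x - fl z) := by ring
          rw [hP, this]
          exact Submodule.add_mem_sup (LinearMap.mem_range_self fl z) hd
        · intro hx
          rw [hP] at hx
          obtain ⟨u, hu, v, hv, rfl⟩ := Submodule.mem_sup.mp hx
          obtain ⟨z, rfl⟩ := hu
          refine ⟨π z, ?_⟩
          rw [hcomm, map_add, (hkerπ v).mpr hv, add_zero]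
      have e1 : P.toAddSubgroup.index = Nat.card ((Fin ℓ → ZMod q) ⧸ F.range) := by
        rw [AddSubgroup.index, ← hQker]
        exact Nat.card_congr (QuotientAddGroup.quotientKerEquivOfSurjective Q hQs).toEquiv
      have h2 : Nat.card (Fin ℓ → ZMod q)
          = Nat.card ((Fin ℓ → ZMod q) ⧸ F.range) * Nat.card F.range :=
        AddSubgroup.card_eq_card_quotient_mul_card_addSubgroup F.range
      have h3 : Nat.card (Fin ℓ → ZMod q) = Nat.card F.range * Nat.card F.ker := by
        rw [← Nat.card_congr (QuotientAddGroup.quotientKerEquivRange F).toEquiv]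
        exact AddSubgroup.card_eq_card_quotient_mul_card_addSubgroup F.ker
      have htpos : 0 < Nat.card F.range := Nat.card_pos
      have hcard : Nat.card {x : Fin ℓ → ZMod q //
          Matrix.vecMul x (M.map (Int.cast : ℤ → ZMod q)) = 0} = Nat.card F.ker := by
        apply Nat.card_congr
        apply Equiv.subtypeEquivRight
        intro x
        simp [hF, AddMonoidHom.mem_ker, eq_comm]
      rw [hcard, e1]
      have := h2.symm.trans h3
      rw [mul_comm (Nat.card F.range)] at this
      exact (Nat.eq_of_mul_eq_mul_right htpos this).symm
    rw [stepA]
    -- Step B : index computation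
    set d : Fin ℓ → ℤ :=
      Function.extend φ (fun i => (Int.gcd (a i) (q : ℤ) : ℤ)) (fun _ => (q : ℤ)) with hd
    have hdφ : ∀ i, d (φ i) = (Int.gcd (a i) (q : ℤ) : ℤ) := fun i =>
      φ.injective.extend_apply _ _ i
    have hdn : ∀ j, ¬(∃ i, φ i = j) → d j = (q : ℤ) := fun j hj =>
      Function.extend_apply' _ _ _ hj
    have hq0 : (q : ℤ) ≠ 0 := by exact_mod_cast hq.ne'
    have hdvdq : ∀ j, d j ∣ (q : ℤ) := by
      intro j
      by_cases hj : ∃ i, φ i = j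
      · obtain ⟨i, rfl⟩ := hj
        rw [hdφ]
        exact Int.gcd_dvd_right _ _
      · rw [hdn j hj]
    have hdne : ∀ j, d j ≠ 0 := by
      intro j hj0
      exact hq0 (zero_dvd_iff.mp (hj0 ▸ hdvdq j))
    set w : Fin ℓ → (Fin ℓ → ℤ) := fun j => d j • bM j with hw
    have hwli : LinearIndependent ℤ w := by
      rw [Fintype.linearIndependent_iff]
      intro c hc j
      have hb := Fintype.linearIndependent_iff.mp bM.linearIndependent (fun j => c j * d j)
      have : ∑ j, (c j * d j) • bM j = 0 := by
        rw [← hc]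
        exact Finset.sum_congr rfl fun j _ => (smul_smul (c j) (d j) (bM j)).symm
      have := hb this j
      rcases mul_eq_zero.mp this with h | h
      · exact h
      · exact absurd h (hdne j)
    have hNspan : N = Submodule.span ℤ (Set.range fun i : Fin r => a i • bM (φ i)) := by
      conv_lhs => rw [show N = Submodule.map N.subtype ⊤ by
        rw [Submodule.map_top, Submodule.range_subtype]]
      rw [← bN.span_eq, Submodule.map_span, ← Set.range_comp]
      congr 1
      ext x
      constructor
      · rintro ⟨i, rfl⟩; exact ⟨i, (hsnf i).symm⟩
      · rintro ⟨i, rfl⟩; exact ⟨i, hsnf i⟩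
    have hqTspan : qT = Submodule.span ℤ (Set.range fun j => (q : ℤ) • bM j) := by
      rw [hqT, LinearMap.range_eq_map, ← bM.span_eq, Submodule.map_span, ← Set.range_comp]
      rfl
    have hspan : Submodule.span ℤ (Set.range w) = P := by
      apply le_antisymm
      · rw [Submodule.span_le]
        rintro _ ⟨j, rfl⟩
        by_cases hj : ∃ i, φ i = j
        · obtain ⟨i, rfl⟩ := hj
          have h1 : a i • bM (φ i) ∈ P := by
            apply Submodule.mem_sup_left
            rw [← hsnf i]; exact (bN i).2
          have h2 : (q : ℤ) • bM (φ i) ∈ P := by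
            apply Submodule.mem_sup_right
            exact ⟨bM (φ i), by simp⟩
          have hbez : w (φ i) = Int.gcdA (a i) (q : ℤ) • (a i • bM (φ i))
              + Int.gcdB (a i) (q : ℤ) • ((q : ℤ) • bM (φ i)) := by
            rw [hw]
            simp only [smul_smul]
            rw [hdφ, ← add_smul]
            congr 1
            rw [Int.gcd_eq_gcd_ab (a i) (q : ℤ)]
            ring
          rw [hbez]
          exact Submodule.add_mem _ (Submodule.smul_mem _ _ h1) (Submodule.smul_mem _ _ h2)
        · rw [hw]
          simp only
          rw [hdn j hj]
          apply Submodule.mem_sup_right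
          exact ⟨bM j, by simp⟩
      · rw [hP]
        apply sup_le
        · rw [hNspan, Submodule.span_le]
          rintro _ ⟨i, rfl⟩
          obtain ⟨cc, hcc⟩ : d (φ i) ∣ a i := by rw [hdφ]; exact Int.gcd_dvd_left _ _
          have heq : a i • bM (φ i) = cc • w (φ i) := by
            rw [hw]; simp only [smul_smul]; rw [hcc]; ring_nf
          show a i • bM (φ i) ∈ (Submodule.span ℤ (Set.range w) : Set (Fin ℓ → ℤ))
          rw [heq]
          exact Submodule.smul_mem _ _ (Submodule.subset_span ⟨φ i, rfl⟩)
        · rw [hqTspan, Submodule.span_le]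
          rintro _ ⟨j, rfl⟩
          obtain ⟨cc, hcc⟩ := hdvdq j
          have heq : (q : ℤ) • bM j = cc • w j := by
            rw [hw]; simp only [smul_smul]; rw [hcc]; ring_nf
          show (q : ℤ) • bM j ∈ (Submodule.span ℤ (Set.range w) : Set (Fin ℓ → ℤ))
          rw [heq]
          exact Submodule.smul_mem _ _ (Submodule.subset_span ⟨j, rfl⟩)
    have hwP : ∀ j, w j ∈ P := fun j => hspan ▸ Submodule.subset_span ⟨j, rfl⟩
    let bP : Module.Basis (Fin ℓ) ℤ P := (Module.Basis.span hwli).map (LinearEquiv.ofEq _ _ hspan)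
    have hbP : ∀ j, (bP j : Fin ℓ → ℤ) = d j • bM j := by
      intro j
      simp [bP, Module.Basis.span_apply, hw]
    let snfP : Module.Basis.SmithNormalForm P (Fin ℓ) ℓ :=
      ⟨bM, bP, Function.Embedding.refl _, d, fun i => by simpa using hbP i⟩
    have hidx := snfP.toAddSubgroup_index_eq_pow_mul_prod
    simp only [Fintype.card_fin, Nat.sub_self, pow_zero, one_mul,
      Ideal.span_singleton_toAddSubgroup_eq_zmultiples, Int.index_zmultiples] at hidx
    rw [hidx]
    -- now : ∏ j, (d j).natAbs = (∏ i, Int.gcd (a i) q) * q ^ (ℓ - r)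
    have hsub : Finset.univ.map φ ⊆ (Finset.univ : Finset (Fin ℓ)) := Finset.subset_univ _
    rw [← Finset.prod_sdiff hsub]
    have hout : ∀ j ∈ (Finset.univ : Finset (Fin ℓ)) \ Finset.univ.map φ, (d j).natAbs = q := by
      intro j hj
      rw [Finset.mem_sdiff, Finset.mem_map] at hj
      have : ¬ ∃ i, φ i = j := by
        rintro ⟨i, rfl⟩
        exact hj.2 ⟨i, Finset.mem_univ i, rfl⟩
      rw [hdn j this, Int.natAbs_natCast]
    rw [Finset.prod_congr rfl hout, Finset.prod_const, Finset.prod_map]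
    have hin : ∀ i : Fin r, (d (φ i)).natAbs = Int.gcd (a i) (q : ℤ) := by
      intro i
      rw [hdφ, Int.natAbs_natCast]
    rw [Finset.card_sdiff_of_subset hsub]
    simp only [Finset.card_univ, Fintype.card_fin, Finset.card_map]
    rw [mul_comm]
    congr 1
    exact Finset.prod_congr rfl fun i _ => hin i

open Polynomial

/-- The number of `Γ`-orbits of `(ℤ/qℤ)^ℓ` (under the action
induced by an injective `ρ : Γ → GL_ℓ(ℤ)`) is, as a function of `q > 0`, a
quasi-polynomial of degree `ℓ` with leading coefficient `1/#Γ`, and equals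
`(1/#Γ) Σ_{γ∈Γ} #((ℤ/qℤ)^ℓ)^γ` by Burnside's lemma. -/
theorem stmt13 (ℓ : ℕ) (Γ : Type*) [Group Γ] [Fintype Γ]
    (ρ : Γ →* Matrix.GeneralLinearGroup (Fin ℓ) ℤ) (hρ : Function.Injective ρ) :
    ∃ n : ℕ, 0 < n ∧ ∃ g : ℕ → Polynomial ℚ,
      (∀ q : ℕ, 0 < q →
        ((Nat.card (Quot (fun x y : Fin ℓ → ZMod q => ∃ γ : Γ,
            Matrix.vecMul x ((ρ γ : Matrix (Fin ℓ) (Fin ℓ) ℤ).map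
              (Int.cast : ℤ → ZMod q)) = y)) : ℚ)
          = (g (q % n)).eval (q : ℚ))
        ∧ ((Nat.card (Quot (fun x y : Fin ℓ → ZMod q => ∃ γ : Γ,
            Matrix.vecMul x ((ρ γ : Matrix (Fin ℓ) (Fin ℓ) ℤ).map
              (Int.cast : ℤ → ZMod q)) = y)) : ℚ)
          = (Fintype.card Γ : ℚ)⁻¹ * ∑ γ : Γ,
              (Nat.card {x : Fin ℓ → ZMod q //
                Matrix.vecMul x ((ρ γ : Matrix (Fin ℓ) (Fin ℓ) ℤ).map
                  (Int.cast : ℤ → ZMod q)) = x} : ℚ)))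
      ∧ ∀ a : ℕ, a < n →
          (g a).natDegree = ℓ ∧ (g a).coeff ℓ = (Fintype.card Γ : ℚ)⁻¹ := by
  classical
  have key := fun γ : Γ => keyCount ℓ ((ρ γ : Matrix (Fin ℓ) (Fin ℓ) ℤ) - 1)
  choose r aa hrle hane hr0 hcount using key
  have hΓ0 : (Fintype.card Γ : ℚ) ≠ 0 := Nat.cast_ne_zero.mpr Fintype.card_ne_zero
  have hγ1 : ∀ γ : Γ, r γ = 0 ↔ γ = 1 := by
    intro γ
    rw [hr0 γ, sub_eq_zero]
    constructor
    · intro h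
      apply hρ
      rw [_root_.map_one]
      exact Units.ext h
    · rintro rfl
      rw [_root_.map_one]
      rfl
  set n : ℕ := ∏ γ : Γ, ∏ i, (aa γ i).natAbs with hn
  have hnpos : 0 < n :=
    Finset.prod_pos fun γ _ => Finset.prod_pos fun i _ => Int.natAbs_pos.mpr (hane γ i)
  have hdvdn : ∀ γ i, (aa γ i).natAbs ∣ n := by
    intro γ i
    have h1 : (aa γ i).natAbs ∣ ∏ j, (aa γ j).natAbs :=
      Finset.dvd_prod_of_mem _ (Finset.mem_univ i)
    have h2 : (∏ j, (aa γ j).natAbs) ∣ n :=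
      Finset.dvd_prod_of_mem (fun γ' => ∏ j, (aa γ' j).natAbs) (Finset.mem_univ γ)
    exact h1.trans h2
  -- gcd periodicity
  have hper : ∀ (γ : Γ) (i : Fin (r γ)) (q : ℕ),
      Int.gcd (aa γ i) (q : ℤ) = Int.gcd (aa γ i) ((q % n : ℕ) : ℤ) := by
    intro γ i q
    have hdvd := hdvdn γ i
    show Nat.gcd (aa γ i).natAbs ((q:ℤ)).natAbs = Nat.gcd (aa γ i).natAbs (((q % n : ℕ):ℤ)).natAbs
    rw [Int.natAbs_natCast, Int.natAbs_natCast]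
    conv_lhs => rw [Nat.gcd_rec ((aa γ i).natAbs) q]
    conv_rhs => rw [Nat.gcd_rec ((aa γ i).natAbs) (q % n)]
    rw [Nat.mod_mod_of_dvd q hdvd]
  set g : ℕ → Polynomial ℚ := fun a₀ => C (Fintype.card Γ : ℚ)⁻¹ *
      ∑ γ : Γ, C (((∏ i, Int.gcd (aa γ i) ((a₀ : ℕ) : ℤ) : ℕ)) : ℚ) * X ^ (ℓ - r γ) with hg
  refine ⟨n, hnpos, g, fun q hq => ?_, fun a₀ _ => ?_⟩
  · haveI : NeZero q := ⟨hq.ne'⟩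
    -- fixed point cardinality
    have hfixcard : ∀ γ : Γ, Nat.card {x : Fin ℓ → ZMod q //
        Matrix.vecMul x ((ρ γ : Matrix (Fin ℓ) (Fin ℓ) ℤ).map (Int.cast : ℤ → ZMod q)) = x}
        = (∏ i, Int.gcd (aa γ i) (q : ℤ)) * q ^ (ℓ - r γ) := by
      intro γ
      rw [← hcount γ q hq]
      apply Nat.card_congr
      apply Equiv.subtypeEquivRight
      intro x
      have hmap : ((ρ γ : Matrix (Fin ℓ) (Fin ℓ) ℤ) - 1).map (Int.cast : ℤ → ZMod q)
          = (ρ γ : Matrix (Fin ℓ) (Fin ℓ) ℤ).map (Int.cast : ℤ → ZMod q) - 1 := by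
        ext i j
        simp only [Matrix.map_apply, Matrix.sub_apply, Matrix.one_apply]
        push_cast
        split_ifs <;> simp
      rw [hmap, Matrix.vecMul_sub, Matrix.vecMul_one, sub_eq_zero]
    -- Burnside
    have hburn : (Nat.card (Quot (fun x y : Fin ℓ → ZMod q => ∃ γ : Γ,
        Matrix.vecMul x ((ρ γ : Matrix (Fin ℓ) (Fin ℓ) ℤ).map
          (Int.cast : ℤ → ZMod q)) = y)) : ℚ)
        = (Fintype.card Γ : ℚ)⁻¹ * ∑ γ : Γ,
            (Nat.card {x : Fin ℓ → ZMod q //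
              Matrix.vecMul x ((ρ γ : Matrix (Fin ℓ) (Fin ℓ) ℤ).map
                (Int.cast : ℤ → ZMod q)) = x} : ℚ) := by
      set ψ : Γ →* (Matrix (Fin ℓ) (Fin ℓ) (ZMod q))ˣ :=
        (Matrix.GeneralLinearGroup.map (Int.castRingHom (ZMod q))).comp ρ with hψdef
      have hψ : ∀ γ : Γ, ((ψ γ : Matrix (Fin ℓ) (Fin ℓ) (ZMod q)))
          = ((ρ γ : Matrix (Fin ℓ) (Fin ℓ) ℤ)).map (Int.cast : ℤ → ZMod q) := fun γ => rfl
      letI act : MulAction Γ (Fin ℓ → ZMod q) :=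
        { smul := fun γ x => Matrix.vecMul x ((ψ γ⁻¹ : Matrix (Fin ℓ) (Fin ℓ) (ZMod q)))
          one_smul := fun x => by
            show Matrix.vecMul x ((ψ (1:Γ)⁻¹ : Matrix (Fin ℓ) (Fin ℓ) (ZMod q))) = x
            rw [inv_one, _root_.map_one, Units.val_one, Matrix.vecMul_one]
          mul_smul := fun γ δ x => by
            show Matrix.vecMul x ((ψ (γ * δ)⁻¹ : Matrix (Fin ℓ) (Fin ℓ) (ZMod q)))
              = Matrix.vecMul (Matrix.vecMul x ((ψ δ⁻¹ : Matrix (Fin ℓ) (Fin ℓ) (ZMod q))))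
                ((ψ γ⁻¹ : Matrix (Fin ℓ) (Fin ℓ) (ZMod q)))
            rw [Matrix.vecMul_vecMul, _root_.mul_inv_rev, _root_.map_mul, Units.val_mul] }
      have hsmul : ∀ (γ : Γ) (x : Fin ℓ → ZMod q),
          γ • x = Matrix.vecMul x ((ψ γ⁻¹ : Matrix (Fin ℓ) (Fin ℓ) (ZMod q))) := fun _ _ => rfl
      have hmulinv : ∀ (γ : Γ) (x : Fin ℓ → ZMod q),
          Matrix.vecMul (Matrix.vecMul x ((ψ γ : Matrix (Fin ℓ) (Fin ℓ) (ZMod q))))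
            ((ψ γ⁻¹ : Matrix (Fin ℓ) (Fin ℓ) (ZMod q))) = x := by
        intro γ x
        rw [Matrix.vecMul_vecMul, ← Units.val_mul, ← _root_.map_mul, mul_inv_cancel,
          _root_.map_one, Units.val_one, Matrix.vecMul_one]
      have hrel : (fun x y : Fin ℓ → ZMod q => ∃ γ : Γ,
          Matrix.vecMul x ((ρ γ : Matrix (Fin ℓ) (Fin ℓ) ℤ).map (Int.cast : ℤ → ZMod q)) = y)
          = fun x y => x ∈ MulAction.orbit Γ y := by
        funext x y
        apply propext
        constructor
        · rintro ⟨γ, rfl⟩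
          refine ⟨γ, ?_⟩
          show Matrix.vecMul _ _ = x
          rw [← hψ γ]
          exact hmulinv γ x
        · rintro ⟨δ, rfl⟩
          refine ⟨δ, ?_⟩
          show Matrix.vecMul (Matrix.vecMul y ((ψ δ⁻¹ : Matrix (Fin ℓ) (Fin ℓ) (ZMod q))))
            ((ρ δ : Matrix (Fin ℓ) (Fin ℓ) ℤ).map (Int.cast : ℤ → ZMod q)) = y
          rw [← hψ δ]
          have := hmulinv δ⁻¹ y
          rwa [inv_inv] at this
      rw [hrel]
      haveI : ∀ a : Γ, Fintype (MulAction.fixedBy (Fin ℓ → ZMod q) a) :=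
        fun a => Fintype.ofFinite _
      haveI : Fintype (Quotient (MulAction.orbitRel Γ (Fin ℓ → ZMod q))) := Fintype.ofFinite _
      have hb := MulAction.sum_card_fixedBy_eq_card_orbits_mul_card_group Γ (Fin ℓ → ZMod q)
      have hQeq : Nat.card (Quot (fun x y : Fin ℓ → ZMod q => x ∈ MulAction.orbit Γ y))
          = Fintype.card (Quotient (MulAction.orbitRel Γ (Fin ℓ → ZMod q))) := by
        have e : Quot (fun x y : Fin ℓ → ZMod q => x ∈ MulAction.orbit Γ y)
            = Quotient (MulAction.orbitRel Γ (Fin ℓ → ZMod q)) := rfl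
        rw [e, Nat.card_eq_fintype_card]
      have hsum : ∑ a : Γ, Fintype.card (MulAction.fixedBy (Fin ℓ → ZMod q) a)
          = ∑ γ : Γ, Nat.card {x : Fin ℓ → ZMod q //
              Matrix.vecMul x ((ρ γ : Matrix (Fin ℓ) (Fin ℓ) ℤ).map
                (Int.cast : ℤ → ZMod q)) = x} := by
        apply Fintype.sum_equiv (Equiv.inv Γ)
        intro a
        rw [← Nat.card_eq_fintype_card]
        apply Nat.card_congr
        apply Equiv.subtypeEquivRight
        intro x
        simp only [Equiv.inv_apply, MulAction.mem_fixedBy]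
        rw [hsmul, ← hψ a⁻¹]
      rw [hQeq]
      rw [hsum] at hb
      have hbq : (Fintype.card (Quotient (MulAction.orbitRel Γ (Fin ℓ → ZMod q))) : ℚ)
          * (Fintype.card Γ : ℚ) = ∑ γ : Γ, (Nat.card {x : Fin ℓ → ZMod q //
              Matrix.vecMul x ((ρ γ : Matrix (Fin ℓ) (Fin ℓ) ℤ).map
                (Int.cast : ℤ → ZMod q)) = x} : ℚ) := by
        exact_mod_cast congrArg (Nat.cast : ℕ → ℚ) hb.symm
      rw [← hbq]
      field_simp
    refine ⟨?_, hburn⟩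
    rw [hburn]
    rw [hg]
    simp only [eval_mul, eval_C, eval_finset_sum, eval_pow, eval_X]
    congr 1
    apply Finset.sum_congr rfl
    intro γ _
    rw [hfixcard γ]
    rw [show (∏ i, Int.gcd (aa γ i) ((q : ℕ) : ℤ)) = ∏ i, Int.gcd (aa γ i) (((q % n : ℕ) : ℕ) : ℤ)
      from Finset.prod_congr rfl fun i _ => hper γ i q]
    push_cast
    ring
  · -- degree and leading coefficient
    have hcoeff : (g a₀).coeff ℓ = (Fintype.card Γ : ℚ)⁻¹ := by
      rw [hg]
      simp only [coeff_C_mul, finset_sum_coeff, coeff_C_mul, coeff_X_pow]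
      have hterm : ∀ γ : Γ, (((∏ i, Int.gcd (aa γ i) ((a₀ : ℕ) : ℤ) : ℕ)) : ℚ)
          * (if ℓ = ℓ - r γ then (1:ℚ) else 0) = if γ = 1 then 1 else 0 := by
        intro γ
        by_cases hγ : γ = 1
        · subst hγ
          have hr1 : r 1 = 0 := (hγ1 1).mpr rfl
          haveI : IsEmpty (Fin (r 1)) := by rw [hr1]; infer_instance
          rw [if_pos rfl, if_pos (by rw [hr1, Nat.sub_zero])]
          rw [Finset.univ_eq_empty, Finset.prod_empty]
          norm_num
        · rw [if_neg hγ]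
          have hrpos : 0 < r γ := Nat.pos_of_ne_zero (fun h => hγ ((hγ1 γ).mp h))
          have : ℓ ≠ ℓ - r γ := by
            have := hrle γ
            omega
          rw [if_neg this, mul_zero]
      rw [Finset.sum_congr rfl fun γ _ => hterm γ]
      rw [Finset.sum_ite_eq' Finset.univ (1:Γ) (fun _ => (1:ℚ))]
      simp
    refine ⟨?_, hcoeff⟩
    apply le_antisymm
    · rw [hg]
      apply le_trans (natDegree_mul_le)
      rw [natDegree_C, zero_add]
      apply natDegree_sum_le_of_forall_le
      intro γ _
      apply le_trans (natDegree_C_mul_le _ _)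
      rw [natDegree_X_pow]
      exact Nat.sub_le _ _
    · exact le_natDegree_of_ne_zero (by rw [hcoeff]; exact inv_ne_zero hΓ0)
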